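/- arXiv:2411.14124 — 3 statements merged into one kernel-verified Lean document; each statement's English description precedes it below -/
import Mathlib

section
/- For the disk D(a,r) of center a and radius r, with exponential transform E(w,z) = 1 - r²/((w-a)(conj(z)-conj(a))), the four-argument kernel L(w,z;u,v) = (E(v,z)E(w,u) - E(w,z)E(v,u)) / ((v-w)(conj(u)-conj(z))E(w,u)) equals r²/((w-a)(conj(z)-conj(a))(v-a)(conj(u)-conj(a))) · 1/(1 - r²/((w-a)(conj(u)-conj(a)))), for w,z,u,v outside the closed disk. -/
set_option maxHeartbeats 2000000

/-- The four-argument kernel of the disk `D(a,r)`. -/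
theorem L_kernel_disk (a : ℂ) (r : ℝ) (hr : 0 < r) (w z u v : ℂ)
    (hw : r < ‖w - a‖) (hz : r < ‖z - a‖)
    (hu : r < ‖u - a‖) (hv : r < ‖v - a‖)
    (hvw : v ≠ w) (huz : u ≠ z) :
    letI E : ℂ → ℂ → ℂ := fun w z =>
      1 - (r : ℂ)^2 / ((w - a) * ((starRingEnd ℂ) z - (starRingEnd ℂ) a))
    (E v z * E w u - E w z * E v u) /
      ((v - w) * ((starRingEnd ℂ) u - (starRingEnd ℂ) z) * E w u) =
    (r : ℂ)^2 / ((w - a) * ((starRingEnd ℂ) z - (starRingEnd ℂ) a) *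
        (v - a) * ((starRingEnd ℂ) u - (starRingEnd ℂ) a)) *
      (1 / (1 - (r : ℂ)^2 /
        ((w - a) * ((starRingEnd ℂ) u - (starRingEnd ℂ) a)))) := by
  have habs : ∀ x : ℂ, r < ‖x - a‖ → x - a ≠ 0 := fun x hx => by
    intro h; rw [h] at hx; simp at hx; linarith
  have hwa := habs w hw
  have hza := habs z hz
  have hua := habs u hu
  have hva := habs v hv
  have hcza : (starRingEnd ℂ) z - (starRingEnd ℂ) a ≠ 0 :=
    sub_ne_zero.mpr fun h => hza (sub_eq_zero.mpr ((starRingEnd ℂ).injective h))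
  have hcua : (starRingEnd ℂ) u - (starRingEnd ℂ) a ≠ 0 :=
    sub_ne_zero.mpr fun h => hua (sub_eq_zero.mpr ((starRingEnd ℂ).injective h))
  have hvw' : v - w ≠ 0 := sub_ne_zero.mpr hvw
  have hcuz : (starRingEnd ℂ) u - (starRingEnd ℂ) z ≠ 0 :=
    sub_ne_zero.mpr fun h => huz ((starRingEnd ℂ).injective h)
  have hE : 1 - (r : ℂ)^2 / ((w - a) * ((starRingEnd ℂ) u - (starRingEnd ℂ) a)) ≠ 0 := by
    intro h
    have h1 : (r : ℂ)^2 / ((w - a) * ((starRingEnd ℂ) u - (starRingEnd ℂ) a)) = 1 := by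
      linear_combination -h
    have h2 := congrArg (fun x : ℂ => ‖x‖) h1
    rw [norm_div, norm_mul, norm_pow, Complex.norm_real, Real.norm_eq_abs, ← map_sub,
      Complex.norm_conj, abs_of_pos hr, norm_one] at h2
    rw [div_eq_one_iff_eq (mul_ne_zero (ne_of_gt (hr.trans hw)) (ne_of_gt (hr.trans hu)))] at h2
    nlinarith [hr.trans hw, hr.trans hu]
  have key : ∀ A B C D s : ℂ, A ≠ 0 → B ≠ 0 → C ≠ 0 → D ≠ 0 →
      C - A ≠ 0 → D - B ≠ 0 → (1 - s / (A * D)) ≠ 0 →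
      ((1 - s / (C * B)) * (1 - s / (A * D)) - (1 - s / (A * B)) * (1 - s / (C * D))) /
        ((C - A) * (D - B) * (1 - s / (A * D))) =
      s / (A * B * C * D) * (1 / (1 - s / (A * D))) := by
    intro A B C D s hA hB hC hD hCA hDB hE'
    have hnum : (1 - s / (C * B)) * (1 - s / (A * D)) - (1 - s / (A * B)) * (1 - s / (C * D)) =
        s * (C - A) * (D - B) / (A * B * C * D) := by
      field_simp
      ring
    rw [hnum]
    generalize hg : 1 - s / (A * D) = e at hE' ⊢
    rw [div_div, div_mul_div_comm, mul_one]
    rw [div_eq_div_iff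
      (mul_ne_zero (mul_ne_zero (mul_ne_zero (mul_ne_zero hA hB) hC) hD)
        (mul_ne_zero (mul_ne_zero hCA hDB) hE'))
      (mul_ne_zero (mul_ne_zero (mul_ne_zero (mul_ne_zero hA hB) hC) hD) hE')]
    ring
  have h1 : v - w = (v - a) - (w - a) := by ring
  have h2 : (starRingEnd ℂ) u - (starRingEnd ℂ) z =
      ((starRingEnd ℂ) u - (starRingEnd ℂ) a) - ((starRingEnd ℂ) z - (starRingEnd ℂ) a) := by
    ring
  rw [h1, h2]
  exact key (w - a) ((starRingEnd ℂ) z - (starRingEnd ℂ) a) (v - a)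
    ((starRingEnd ℂ) u - (starRingEnd ℂ) a) ((r : ℂ)^2) hwa hcza hva hcua
    (by rw [← h1]; exact hvw') (by rw [← h2]; exact hcuz) hE
end

section
/- With E = E₁E₂ and kernels L, L₁, L₂ as above, one has L/E(v,z) = L₁/E₁(v,z) + L₂/E₂(v,z) - (v-w)(conj u - conj z)·(L₁/E₁(v,z))·(L₂/E₂(v,z)). -/
lemma merging_aux (a₁ b₁ c₁ d₁ a₂ b₂ c₂ d₂ D : ℂ)
    (ha₁ : a₁ ≠ 0) (hb₁ : b₁ ≠ 0) (ha₂ : a₂ ≠ 0) (hb₂ : b₂ ≠ 0) (hD : D ≠ 0) :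
    (a₁ * a₂ * (b₁ * b₂) - c₁ * c₂ * (d₁ * d₂)) / (D * (b₁ * b₂)) / (a₁ * a₂) =
      (a₁ * b₁ - c₁ * d₁) / (D * b₁) / a₁ + (a₂ * b₂ - c₂ * d₂) / (D * b₂) / a₂ -
      D * ((a₁ * b₁ - c₁ * d₁) / (D * b₁) / a₁) * ((a₂ * b₂ - c₂ * d₂) / (D * b₂) / a₂) := by
  field_simp
  ring

/-- Merging identity for the quotient kernels `L/E(v,z)`. -/
theorem merging_identity_2 (E₁ E₂ : ℂ → ℂ → ℂ) (w z u v : ℂ)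
    (h1 : E₁ w u ≠ 0) (h2 : E₂ w u ≠ 0)
    (h3 : E₁ v z ≠ 0) (h4 : E₂ v z ≠ 0)
    (hvw : v ≠ w) (huz : u ≠ z) :
    letI E : ℂ → ℂ → ℂ := fun w z => E₁ w z * E₂ w z
    letI L : ℂ → ℂ → ℂ → ℂ → ℂ := fun w z u v =>
      (E v z * E w u - E w z * E v u) /
        ((v - w) * ((starRingEnd ℂ) u - (starRingEnd ℂ) z) * E w u)
    letI L₁ : ℂ → ℂ → ℂ → ℂ → ℂ := fun w z u v =>
      (E₁ v z * E₁ w u - E₁ w z * E₁ v u) /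
        ((v - w) * ((starRingEnd ℂ) u - (starRingEnd ℂ) z) * E₁ w u)
    letI L₂ : ℂ → ℂ → ℂ → ℂ → ℂ := fun w z u v =>
      (E₂ v z * E₂ w u - E₂ w z * E₂ v u) /
        ((v - w) * ((starRingEnd ℂ) u - (starRingEnd ℂ) z) * E₂ w u)
    L w z u v / E v z =
      L₁ w z u v / E₁ v z + L₂ w z u v / E₂ v z -
      (v - w) * ((starRingEnd ℂ) u - (starRingEnd ℂ) z) *
        (L₁ w z u v / E₁ v z) * (L₂ w z u v / E₂ v z) := by
  have hvw' : v - w ≠ 0 := sub_ne_zero.mpr hvw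
  have huz' : (starRingEnd ℂ) u - (starRingEnd ℂ) z ≠ 0 := by
    simpa [sub_ne_zero] using fun h => huz ((starRingEnd ℂ).injective h)
  have hD : (v - w) * ((starRingEnd ℂ) u - (starRingEnd ℂ) z) ≠ 0 := mul_ne_zero hvw' huz'
  have := merging_aux (E₁ v z) (E₁ w u) (E₁ w z) (E₁ v u) (E₂ v z) (E₂ w u) (E₂ w z) (E₂ v u)
    ((v - w) * ((starRingEnd ℂ) u - (starRingEnd ℂ) z)) h3 h1 h4 h2 hD
  simp only
  convert this using 2
end

section
/- For the two symmetric unit disks D(-a,1), D(a,1) with a > 1/√2, the unique (up to unitary equivalence) 2×2 matrix D₀* with cyclic vector ξ = (√2, 0)ᵀ satisfying ‖(D₀* + conj z)ξ‖² = 2|z|² + 2a² - 1 for all z and minimal polynomial z² - a², is D₀* = [[0, a²/√(a²-1/2)], [√(a²-1/2), 0]]; and the matrix -[D₀*, D₀] + ξ⟨·,ξ⟩ is positive definite if and only if a > √3/2. -/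
open ComplexOrder

open Matrix

lemma posdef_diag (d0 d1 : ℝ) :
    (!![(d0:ℂ), 0; 0, (d1:ℂ)]).PosDef ↔ 0 < d0 ∧ 0 < d1 := by
  rw [Matrix.posDef_iff_dotProduct_mulVec]
  constructor
  · rintro ⟨-, h⟩
    have h0 := h (x := ![1,0]) (by intro hc; simpa using congrFun hc 0)
    have h1 := h (x := ![0,1]) (by intro hc; simpa using congrFun hc 1)
    simp [dotProduct, Matrix.mulVec, Fin.sum_univ_two] at h0 h1
    exact ⟨h0, h1⟩
  · rintro ⟨h0, h1⟩
    constructor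
    · ext i j; fin_cases i <;> fin_cases j <;> simp [Matrix.conjTranspose_apply]
    · intro x hx
      have key : star x ⬝ᵥ (!![(d0:ℂ), 0; 0, (d1:ℂ)]).mulVec x
          = (d0 * Complex.normSq (x 0) + d1 * Complex.normSq (x 1) : ℝ) := by
        simp [dotProduct, Matrix.mulVec, Fin.sum_univ_two, Complex.normSq_apply,
          Complex.ext_iff]
        constructor <;> ring
      rw [key]
      have hne : x 0 ≠ 0 ∨ x 1 ≠ 0 := by
        by_contra hc
        push_neg at hc
        exact hx (funext fun i => by fin_cases i <;> simp [hc.1, hc.2])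
      have : (0:ℝ) < d0 * Complex.normSq (x 0) + d1 * Complex.normSq (x 1) := by
        rcases hne with h | h
        · have := Complex.normSq_pos.2 h
          nlinarith [Complex.normSq_nonneg (x 1)]
        · have := Complex.normSq_pos.2 h
          nlinarith [Complex.normSq_nonneg (x 0)]
      exact_mod_cast this

set_option maxHeartbeats 1000000 in
/-- The matrix model of the first step of the staircase algorithm for two
symmetric unit disks `D(±a,1)`, `a > 1/√2`. -/
theorem two_disks_matrix_model (a : ℝ) (ha : 1 / Real.sqrt 2 < a) :
    letI ξ : Fin 2 → ℂ := ![((Real.sqrt 2 : ℝ) : ℂ), 0]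
    letI A : Matrix (Fin 2) (Fin 2) ℂ :=
      !![0, ((a ^ 2 / Real.sqrt (a ^ 2 - 1 / 2) : ℝ) : ℂ);
         ((Real.sqrt (a ^ 2 - 1 / 2) : ℝ) : ℂ), 0]
    letI P : Matrix (Fin 2) (Fin 2) ℂ → Prop := fun B =>
      (∀ z : ℂ, ∑ i, Complex.normSq
          ((B + ((starRingEnd ℂ) z) • (1 : Matrix (Fin 2) (Fin 2) ℂ)).mulVec ξ i) =
        2 * Complex.normSq z + 2 * a ^ 2 - 1) ∧
      B * B = ((a : ℂ) ^ 2) • (1 : Matrix (Fin 2) (Fin 2) ℂ) ∧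
      Submodule.span ℂ {ξ, B.mulVec ξ} = ⊤
    P A ∧
    (∀ B : Matrix (Fin 2) (Fin 2) ℂ, P B →
      ∃ U ∈ Matrix.unitaryGroup (Fin 2) ℂ, B = U * A * star U) ∧
    ((-(A * Aᴴ - Aᴴ * A) + Matrix.vecMulVec ξ (star ξ)).PosDef ↔
      Real.sqrt 3 / 2 < a) := by
  have h2pos : (0:ℝ) < Real.sqrt 2 := Real.sqrt_pos.2 (by norm_num)
  have h2r : Real.sqrt 2 * Real.sqrt 2 = 2 := Real.mul_self_sqrt (by norm_num)
  have h2sq : Real.sqrt 2 ^ 2 = 2 := Real.sq_sqrt (by norm_num)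
  have ha0 : 0 < a := lt_trans (by positivity) ha
  have ha2 : 1/2 < a^2 := by
    have h1 : 1 < a * Real.sqrt 2 := (div_lt_iff₀ h2pos).mp ha
    nlinarith [h1, h2sq]
  set s : ℝ := Real.sqrt (a^2 - 1/2) with hs_def
  have hs2 : s^2 = a^2 - 1/2 := Real.sq_sqrt (by linarith)
  have hs0 : 0 < s := Real.sqrt_pos.2 (by linarith)
  have hsne : s ≠ 0 := ne_of_gt hs0
  set p : ℝ := a^2 / s with hp_def
  have hps : p * s = a^2 := by rw [hp_def, div_mul_cancel₀ _ hsne]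
  have hpsC : (p:ℂ) * (s:ℂ) = (a:ℂ)^2 := by exact_mod_cast congrArg Complex.ofReal hps
  beta_reduce
  set ξ : Fin 2 → ℂ := ![((Real.sqrt 2 : ℝ) : ℂ), 0] with hξ_def
  set A : Matrix (Fin 2) (Fin 2) ℂ := !![0, (p:ℂ); (s:ℂ), 0] with hA
  clear_value s p
  refine ⟨⟨?_, ?_, ?_⟩, ?_, ?_⟩
  · -- norm identity
    intro z
    simp [hA, hξ_def, Matrix.mulVec, dotProduct, Fin.sum_univ_two, Matrix.add_apply,
      Matrix.smul_apply, Matrix.one_apply, Complex.normSq_apply, Complex.add_re,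
      Complex.add_im, Complex.mul_re, Complex.mul_im]
    ring_nf
    rw [h2sq]
    linarith [hs2]
  · -- minimal polynomial
    ext i j
    fin_cases i <;> fin_cases j <;>
      simp [hA, Matrix.mul_apply, Fin.sum_univ_two, Matrix.smul_apply, Matrix.one_apply] <;>
      push_cast <;>
      linear_combination hpsC
  · -- span
    have c1 : ((Real.sqrt 2:ℝ):ℂ) ≠ 0 := by exact_mod_cast ne_of_gt h2pos
    have c2 : ((s * Real.sqrt 2:ℝ):ℂ) ≠ 0 := by
      exact_mod_cast ne_of_gt (mul_pos hs0 h2pos)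
    have hAx : A.mulVec ξ = ![0, ((s * Real.sqrt 2 : ℝ):ℂ)] := by
      funext i
      fin_cases i <;>
        simp [hA, hξ_def, Matrix.mulVec, dotProduct, Fin.sum_univ_two] <;>
        push_cast <;> ring
    rw [Submodule.eq_top_iff']
    intro x
    have hx : x = (x 0 / ((Real.sqrt 2:ℝ):ℂ)) • ξ
        + (x 1 / ((s * Real.sqrt 2:ℝ):ℂ)) • A.mulVec ξ := by
      rw [hAx]
      funext i
      fin_cases i <;> simp [hξ_def] <;> field_simp
    rw [hx]
    exact Submodule.add_mem _
      (Submodule.smul_mem _ _ (Submodule.subset_span (Set.mem_insert _ _)))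
      (Submodule.smul_mem _ _ (Submodule.subset_span (Set.mem_insert_of_mem _ rfl)))
  · -- uniqueness
    rintro B ⟨hB1, hB2, -⟩
    have e0 := hB1 0
    have e1 := hB1 1
    have eI := hB1 Complex.I
    simp [hξ_def, Matrix.mulVec, dotProduct, Fin.sum_univ_two, Matrix.add_apply,
      Matrix.smul_apply, Matrix.one_apply, Complex.normSq_apply, Complex.add_re,
      Complex.add_im, Complex.mul_re, Complex.mul_im] at e0 e1 eI
    ring_nf at e0 e1 eI
    rw [h2sq] at e0 e1 eI
    have hre : (B 0 0).re = 0 := by linarith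
    have him : (B 0 0).im = 0 := by linarith
    have hb00 : B 0 0 = 0 := by
      apply Complex.ext <;> simp [hre, him]
    have hb10 : Complex.normSq (B 1 0) = a^2 - 1/2 := by
      rw [Complex.normSq_apply]
      nlinarith [e0, congrArg Complex.re hb00, congrArg Complex.im hb00,
        sq_nonneg (B 0 0).re, sq_nonneg (B 0 0).im]
    have hb10ne : B 1 0 ≠ 0 := by
      intro hc
      rw [hc] at hb10
      simp at hb10
      linarith
    have h00 : B 0 0 * B 0 0 + B 0 1 * B 1 0 = (a:ℂ)^2 := by
      have := congrFun (congrFun hB2 0) 0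
      simpa [Matrix.mul_apply, Fin.sum_univ_two, Matrix.smul_apply, Matrix.one_apply]
        using this
    have h10 : B 1 0 * B 0 0 + B 1 1 * B 1 0 = 0 := by
      have := congrFun (congrFun hB2 1) 0
      simpa [Matrix.mul_apply, Fin.sum_univ_two, Matrix.smul_apply, Matrix.one_apply]
        using this
    have hb11 : B 1 1 = 0 := by
      rw [hb00] at h10
      simp at h10
      rcases h10 with h | h
      · exact h
      · exact absurd h hb10ne
    have hbb : B 0 1 * B 1 0 = (a:ℂ)^2 := by
      rw [hb00] at h00
      simpa using h00
    -- the unitary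
    set u : ℂ := B 1 0 / (s:ℂ) with hu_def
    have hsC : ((s:ℝ):ℂ) ≠ 0 := by exact_mod_cast hsne
    have hnormsq : B 1 0 * (starRingEnd ℂ) (B 1 0) = ((s:ℂ)) * ((s:ℂ)) := by
      rw [Complex.mul_conj, ← Complex.ofReal_mul]
      exact_mod_cast (by nlinarith [hb10, hs2] : Complex.normSq (B 1 0) = s * s)
    have hu_mulconj : u * (starRingEnd ℂ) u = 1 := by
      rw [hu_def, map_div₀, Complex.conj_ofReal, div_mul_div_comm, hnormsq,
        div_self (mul_ne_zero hsC hsC)]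
    refine ⟨!![1, 0; 0, u], ?_, ?_⟩
    · rw [Matrix.mem_unitaryGroup_iff]
      ext i j
      fin_cases i <;> fin_cases j <;>
        simp [Matrix.mul_apply, Fin.sum_univ_two, Matrix.star_apply, Matrix.one_apply,
          hu_mulconj]
    · ext i j
      have hcu : (starRingEnd ℂ) u = (s:ℂ) / B 1 0 := by
        rw [hu_def, map_div₀, Complex.conj_ofReal, div_eq_div_iff hsC hb10ne]
        linear_combination hnormsq
      fin_cases i <;> fin_cases j <;>
        simp [Matrix.mul_apply, Fin.sum_univ_two, Matrix.star_apply, hA, hb00, hb11,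
          hcu, hu_def]
      · field_simp
        apply mul_right_cancel₀ hb10ne
        linear_combination (s:ℂ) * hbb - (s:ℂ) * hpsC - (p:ℂ) * hnormsq
      · field_simp
  · -- positive definiteness
    have hM : (-(A * Aᴴ - Aᴴ * A) + Matrix.vecMulVec ξ (star ξ))
        = !![((s^2 - p^2 + 2 : ℝ):ℂ), 0; 0, ((p^2 - s^2 : ℝ):ℂ)] := by
      have h22 : (Real.sqrt 2 : ℂ) * (Real.sqrt 2 : ℂ) = 2 := by
        rw [← Complex.ofReal_mul, h2r]; norm_num
      rw [hA]
      show (-(!![0, (p:ℂ); (s:ℂ), 0] * !![0, (p:ℂ); (s:ℂ), 0]ᴴ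
          - !![0, (p:ℂ); (s:ℂ), 0]ᴴ * !![0, (p:ℂ); (s:ℂ), 0])
          + vecMulVec ![((Real.sqrt 2:ℝ):ℂ), 0] (star ![((Real.sqrt 2:ℝ):ℂ), 0])) = _
      ext i j
      simp only [Matrix.add_apply, Matrix.neg_apply, Matrix.sub_apply, Matrix.mul_apply,
        Matrix.vecMulVec_apply, Matrix.conjTranspose_apply]
      fin_cases i <;> fin_cases j <;>
        simp [Matrix.mul_apply, Fin.sum_univ_two, Matrix.vecMulVec_apply,
          Matrix.vecMul, dotProduct, Matrix.conjTranspose_apply,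
          Complex.conj_ofReal, Complex.ext_iff] <;>
        norm_num [Real.mul_self_sqrt, Real.sq_sqrt, ← Complex.ofReal_pow] <;> ring
    rw [hM, posdef_diag]
    have hps2 : p^2 * s^2 = a^4 := by
      have := hps
      nlinarith [hps]
    have hsqrt3 : Real.sqrt 3 / 2 < a ↔ 3/4 < a^2 := by
      rw [div_lt_iff₀ (by norm_num), show a * 2 = 2*a by ring,
        Real.sqrt_lt' (by positivity)]
      constructor <;> intro h <;> nlinarith
    rw [hsqrt3]
    have hs2pos : 0 < s^2 := by positivity
    have key : (s^2 - p^2 + 2) * s^2 = a^2 - 3/4 := by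
      linear_combination (s^2 + a^2 + 3/2) * hs2 - hps2
    have key2 : (p^2 - s^2) * s^2 = a^2 - 1/4 := by
      linear_combination hps2 - (s^2 + a^2 - 1/2) * hs2
    constructor
    · rintro ⟨h1, -⟩
      nlinarith [key, mul_pos h1 hs2pos]
    · intro h
      constructor
      · nlinarith [key, hs2pos]
      · nlinarith [key2, hs2pos, ha2]
end
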